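/- Let Z be a real n×n matrix, let S := −(Z + Zᵀ)/2 with spectral decomposition S = UΓUᵀ (U orthogonal, Γ real diagonal), and set P := U·max(Γ, 0)·Uᵀ and D* := (Z − Zᵀ)/2 − P. Then D* belongs to 𝒟 (i.e., D* = J − R for some skew-symmetric J and positive semidefinite R), and for all real n×n matrices J, R with Jᵀ = −J and R positive semidefinite, ‖Z − D*‖_F ≤ ‖Z − (J − R)‖_F; that is, D* is the projection of Z onto 𝒟. -/

import Mathlib

open Matrix

/-- The Frobenius norm of a real matrix. -/
noncomputable def frobNorm {n : ℕ} (A : Matrix (Fin n) (Fin n) ℝ) : ℝ :=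
  Real.sqrt (∑ i, ∑ j, (A i j) ^ 2)

private lemma fsq_eq_trace {n : ℕ} (A : Matrix (Fin n) (Fin n) ℝ) :
    ∑ i, ∑ j, (A i j) ^ 2 = Matrix.trace (Aᵀ * A) := by
  rw [Matrix.trace]
  rw [Finset.sum_comm]
  simp [Matrix.mul_apply, Matrix.diag, sq]

private lemma fsq_conj {n : ℕ} (U A : Matrix (Fin n) (Fin n) ℝ) (hU : Uᵀ * U = 1) :
    ∑ i, ∑ j, ((Uᵀ * A * U) i j) ^ 2 = ∑ i, ∑ j, (A i j) ^ 2 := by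
  have hU' : U * Uᵀ = 1 := mul_eq_one_comm.mp hU
  rw [fsq_eq_trace, fsq_eq_trace]
  have e1 : (Uᵀ * A * U)ᵀ * (Uᵀ * A * U) = Uᵀ * Aᵀ * (U * Uᵀ) * (A * U) := by
    simp only [Matrix.transpose_mul, Matrix.transpose_transpose]
    noncomm_ring
  have e2 : Uᵀ * Aᵀ * (U * Uᵀ) * (A * U) = Uᵀ * (Aᵀ * A) * U := by
    rw [hU']; noncomm_ring
  rw [e1, e2, Matrix.trace_mul_cycle, ← Matrix.mul_assoc, hU', Matrix.one_mul]

private lemma fsq_sym_add_skew {n : ℕ} (S K : Matrix (Fin n) (Fin n) ℝ)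
    (hS : Sᵀ = S) (hK : Kᵀ = -K) :
    ∑ i, ∑ j, ((S + K) i j) ^ 2 = (∑ i, ∑ j, (S i j) ^ 2) + ∑ i, ∑ j, (K i j) ^ 2 := by
  have cross : ∑ i, ∑ j, S i j * K i j = 0 := by
    have h1 : ∑ i, ∑ j, S i j * K i j = ∑ i, ∑ j, S j i * K j i := by
      rw [Finset.sum_comm]
    have h2 : ∀ i j : Fin n, S j i * K j i = -(S i j * K i j) := by
      intro i j
      have hs : S i j = S j i := congrFun (congrFun hS j) i
      have hk : K i j = -K j i := congrFun (congrFun hK j) i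
      rw [hs, hk]; ring
    have h3 : ∑ i, ∑ j, S i j * K i j = -∑ i, ∑ j, S i j * K i j := by
      calc ∑ i, ∑ j, S i j * K i j = ∑ i, ∑ j, S j i * K j i := h1
        _ = ∑ i, ∑ j, -(S i j * K i j) :=
            Finset.sum_congr rfl fun i _ => Finset.sum_congr rfl fun j _ => h2 i j
        _ = -∑ i, ∑ j, S i j * K i j := by simp
    linarith
  have expand : ∀ i j, ((S + K) i j) ^ 2 = (S i j) ^ 2 + (K i j) ^ 2 + 2 * (S i j * K i j) := by
    intro i j; simp only [Matrix.add_apply]; ring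
  simp only [expand, Finset.sum_add_distrib, ← Finset.mul_sum]
  rw [cross]; ring

theorem projection_onto_D {n : ℕ} (Z U : Matrix (Fin n) (Fin n) ℝ) (d : Fin n → ℝ)
    (hU : Uᵀ * U = 1)
    (hS : -((2 : ℝ)⁻¹ • (Z + Zᵀ)) = U * Matrix.diagonal d * Uᵀ) :
    let P := U * Matrix.diagonal (fun i => max (d i) 0) * Uᵀ
    let Dstar := (2 : ℝ)⁻¹ • (Z - Zᵀ) - P
    (∃ J R : Matrix (Fin n) (Fin n) ℝ, Jᵀ = -J ∧ R.PosSemidef ∧ Dstar = J - R) ∧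
    ∀ J R : Matrix (Fin n) (Fin n) ℝ, Jᵀ = -J → R.PosSemidef →
      frobNorm (Z - Dstar) ≤ frobNorm (Z - (J - R)) := by
  intro P Dstar
  have hU' : U * Uᵀ = 1 := mul_eq_one_comm.mp hU
  -- P is PSD
  have hPpsd : P.PosSemidef := by
    have hd : Matrix.PosSemidef (Matrix.diagonal (fun i => max (d i) 0)) :=
      Matrix.PosSemidef.diagonal (fun i => le_max_right _ _)
    have := hd.mul_mul_conjTranspose_same U
    simpa [Matrix.conjTranspose_eq_transpose_of_trivial] using this
  have hPt : Pᵀ = P := by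
    have h := hPpsd.1; simp [Matrix.conjTranspose_eq_transpose_of_trivial] at h; exact h
  -- A := symmetric part of Z
  set A : Matrix (Fin n) (Fin n) ℝ := (2 : ℝ)⁻¹ • (Z + Zᵀ) with hA
  have hAt : Aᵀ = A := by
    simp [hA, Matrix.transpose_add, add_comm]
  have hAeq : A = U * Matrix.diagonal (fun i => -d i) * Uᵀ := by
    have : A = -(U * Matrix.diagonal d * Uᵀ) := by rw [← hS, neg_neg]
    rw [this]
    have : Matrix.diagonal (fun i => -d i) = -(Matrix.diagonal d) := by
      ext i j; by_cases h : i = j <;> simp [Matrix.diagonal, h]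
    rw [this]
    noncomm_ring
  -- Z - Dstar = A + P
  have hZD : Z - Dstar = A + P := by
    show Z - ((2 : ℝ)⁻¹ • (Z - Zᵀ) - P) = A + P
    rw [hA]
    ext i j
    simp [Matrix.sub_apply, Matrix.add_apply, Matrix.smul_apply, smul_eq_mul]
    ring
  constructor
  · exact ⟨(2 : ℝ)⁻¹ • (Z - Zᵀ), P, by
      ext i j
      simp [Matrix.transpose_apply, Matrix.smul_apply, Matrix.sub_apply, smul_eq_mul]
      ring, hPpsd, rfl⟩
  · intro J R hJ hR
    have hRt : Rᵀ = R := by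
      have h := hR.1; simp [Matrix.conjTranspose_eq_transpose_of_trivial] at h; exact h
    -- decompose M := Z - (J - R) into symmetric part A + R and skew part
    set M : Matrix (Fin n) (Fin n) ℝ := Z - (J - R) with hM
    set K : Matrix (Fin n) (Fin n) ℝ := (2 : ℝ)⁻¹ • (Z - Zᵀ) - J with hK
    have hMdec : M = (A + R) + K := by
      rw [hM, hA, hK]
      ext i j
      simp [Matrix.sub_apply, Matrix.add_apply, Matrix.smul_apply, smul_eq_mul]
      ring
    have hARt : (A + R)ᵀ = A + R := by rw [Matrix.transpose_add, hAt, hRt]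
    have hKt : Kᵀ = -K := by
      rw [hK]
      ext i j
      have := congrFun (congrFun hJ i) j
      simp only [Matrix.transpose_apply, Matrix.neg_apply] at this ⊢
      simp [Matrix.sub_apply, Matrix.smul_apply, smul_eq_mul, this]
      ring
    -- key inequality on sums of squares
    have key : ∑ i, ∑ j, ((Z - Dstar) i j) ^ 2 ≤ ∑ i, ∑ j, (M i j) ^ 2 := by
      rw [hMdec, fsq_sym_add_skew (A + R) K hARt hKt, hZD]
      have hKsq : 0 ≤ ∑ i, ∑ j, (K i j) ^ 2 :=
        Finset.sum_nonneg fun i _ => Finset.sum_nonneg fun j _ => sq_nonneg _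
      -- suffices: fsq (A + P) ≤ fsq (A + R)
      have main : ∑ i, ∑ j, ((A + P) i j) ^ 2 ≤ ∑ i, ∑ j, ((A + R) i j) ^ 2 := by
        -- conjugate by U
        have hconjP : Uᵀ * (A + P) * U
            = Matrix.diagonal (fun i => -d i) + Matrix.diagonal (fun i => max (d i) 0) := by
          rw [Matrix.mul_add, Matrix.add_mul, hAeq]
          show Uᵀ * (U * Matrix.diagonal (fun i => -d i) * Uᵀ) * U + Uᵀ * P * U = _
          have e1 : ∀ D : Matrix (Fin n) (Fin n) ℝ, Uᵀ * (U * D * Uᵀ) * U = D := by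
            intro D
            calc Uᵀ * (U * D * Uᵀ) * U = (Uᵀ * U) * D * (Uᵀ * U) := by noncomm_ring
              _ = D := by rw [hU]; simp
          rw [e1, e1]
        set B : Matrix (Fin n) (Fin n) ℝ := Uᵀ * R * U with hB
        have hconjR : Uᵀ * (A + R) * U = Matrix.diagonal (fun i => -d i) + B := by
          rw [Matrix.mul_add, Matrix.add_mul, hAeq]
          have e1 : Uᵀ * (U * Matrix.diagonal (fun i => -d i) * Uᵀ) * U
              = Matrix.diagonal (fun i => -d i) := by
            calc Uᵀ * (U * Matrix.diagonal (fun i => -d i) * Uᵀ) * U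
                = (Uᵀ * U) * Matrix.diagonal (fun i => -d i) * (Uᵀ * U) := by noncomm_ring
              _ = _ := by rw [hU]; simp
          rw [e1]
        have hBpsd : B.PosSemidef := by
          have := hR.conjTranspose_mul_mul_same Uᵀᴴ
          simpa [Matrix.conjTranspose_eq_transpose_of_trivial, hB] using this
        have hBdiag : ∀ i, 0 ≤ B i i := by
          intro i
          exact hBpsd.diag_nonneg
        rw [← fsq_conj U (A + P) hU, ← fsq_conj U (A + R) hU, hconjP, hconjR]
        -- LHS is diagonal
        have hLHS : ∑ i, ∑ j, ((Matrix.diagonal (fun i => -d i)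
            + Matrix.diagonal (fun i => max (d i) 0)) i j) ^ 2
            = ∑ i, (max (-d i) 0) ^ 2 := by
          rw [Matrix.diagonal_add]
          refine Finset.sum_congr rfl fun i _ => ?_
          rw [Finset.sum_eq_single i]
          · simp only [Matrix.diagonal_apply_eq, Pi.add_apply]
            congr 1
            rcases le_or_gt (d i) 0 with h | h
            · rw [max_eq_right (by linarith : d i ≤ 0), max_eq_left (by linarith : (0:ℝ) ≤ -d i)]
              ring
            · rw [max_eq_left (le_of_lt h), max_eq_right (by linarith : -d i ≤ 0)]; ring
          · intro j _ hj
            rw [Matrix.diagonal_apply_ne _ (Ne.symm hj)]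
            ring
          · simp
        rw [hLHS]
        calc ∑ i, (max (-d i) 0) ^ 2
            ≤ ∑ i, ((Matrix.diagonal (fun i => -d i) + B) i i) ^ 2 := by
              apply Finset.sum_le_sum
              intro i _
              have hb := hBdiag i
              simp only [Matrix.add_apply, Matrix.diagonal_apply_eq]
              rcases le_or_gt (d i) 0 with h | h
              · rw [max_eq_left (by linarith : (0:ℝ) ≤ -d i)]
                nlinarith
              · rw [max_eq_right (by linarith : -d i ≤ 0)]
                simpa using sq_nonneg (-d i + B i i)
          _ ≤ ∑ i, ∑ j, ((Matrix.diagonal (fun i => -d i) + B) i j) ^ 2 := by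
              apply Finset.sum_le_sum
              intro i _
              exact Finset.single_le_sum
                (f := fun j => ((Matrix.diagonal (fun i => -d i) + B) i j) ^ 2)
                (fun j _ => sq_nonneg _) (Finset.mem_univ i)
      linarith
    exact Real.sqrt_le_sqrt key
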